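/- Let A_1, A_2, … be a quasifibonacci sequence of level N. If k ≥ 1 and n is an integer with A_k ≤ n < A_{k+1}, then every a ∈ S_n has length l(a) ∈ {k−1, k}. -/

import Mathlib

/-- `A` (with meaningful values at indices `≥ 1`) is a quasifibonacci sequence of level `N`:
the terms are positive, `A (k+N) = A (k+N-1) + ⋯ + A k` for all `k ≥ 1`, and
`A k > A (k-1) + ⋯ + A 1` for all `1 ≤ k ≤ N`. -/
def QuasiFib (N : ℕ) (A : ℕ → ℕ) : Prop :=
  (∀ i, 1 ≤ i → 0 < A i) ∧
  (∀ k, 1 ≤ k → A (k + N) = ∑ i ∈ Finset.Icc k (k + N - 1), A i) ∧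
  (∀ k, 1 ≤ k → k ≤ N → (∑ i ∈ Finset.Icc 1 (k - 1), A i) < A k)

/-- `SRep A n` is the set of partitions of `n` into distinct terms of `A`, encoded as the
finite sets `F` of positive indices with `∑_{i ∈ F} A i = n` (i.e. the 0-1 indicator
sequences of the paper). -/
def SRep (A : ℕ → ℕ) (n : ℕ) : Set (Finset ℕ) :=
  {F | (∀ i ∈ F, 1 ≤ i) ∧ (∑ i ∈ F, A i) = n}

/-- the length `l(a)`: the largest index `i` with `a_i = 1` (and `0` for the empty set). -/
def len (F : Finset ℕ) : ℕ := F.sup id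

/-- The directed edge relation of the digraph `G_n`: `(a,b)` is an edge iff there is a `k ≥ 1`
with `a_{k+N} = 1`, `a_k = ⋯ = a_{k+N-1} = 0`, `b_{k+N} = 0`, `b_k = ⋯ = b_{k+N-1} = 1`, and
`a_t = b_t` for all `t ∉ {k, …, k+N}`. -/
def Edge (N : ℕ) (F G : Finset ℕ) : Prop :=
  ∃ k, 1 ≤ k ∧ (k + N) ∈ F ∧ (∀ i ∈ Finset.Ico k (k + N), i ∉ F) ∧
    (k + N) ∉ G ∧ (∀ i ∈ Finset.Ico k (k + N), i ∈ G) ∧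
    (∀ t, t ∉ Finset.Icc k (k + N) → (t ∈ F ↔ t ∈ G))

/-- The partial order of the poset `P_n`: `a ≥ b` iff `b` is reachable from `a` by a
(possibly empty) directed path of edges. -/
def pge (N : ℕ) : Finset ℕ → Finset ℕ → Prop := Relation.ReflTransGen (Edge N)

/-- `A_{k,0} = A_k + Σ_{1 ≤ i < k-N-1, N∤i} A_{k-N-1-i}`. -/
def Ak0 (N : ℕ) (A : ℕ → ℕ) (k : ℕ) : ℕ :=
  A k + ∑ i ∈ (Finset.Ico 1 (k - N - 1)).filter (fun i => ¬ N ∣ i), A (k - N - 1 - i)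

/-- `A_{k,1} = A_k + Σ_{1 ≤ i < k-N, N∤i} A_{k-N-i}`. -/
def Ak1 (N : ℕ) (A : ℕ → ℕ) (k : ℕ) : ℕ :=
  A k + ∑ i ∈ (Finset.Ico 1 (k - N)).filter (fun i => ¬ N ∣ i), A (k - N - i)

/-- `A_{k,2} = A_k + Σ_{1 ≤ i < k-N+1, N∤i} A_{k-N+1-i}`. -/
def Ak2 (N : ℕ) (A : ℕ → ℕ) (k : ℕ) : ℕ :=
  A k + ∑ i ∈ (Finset.Ico 1 (k - N + 1)).filter (fun i => ¬ N ∣ i), A (k - N + 1 - i)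

lemma qf_step (N : ℕ) (hN : 2 ≤ N) (A : ℕ → ℕ) (hA : QuasiFib N A) :
    ∀ i, 1 ≤ i → A i < A (i + 1) := by
  obtain ⟨hpos, hrec, hinit⟩ := hA
  intro i hi
  rcases le_or_gt (i + 1) N with h | h
  · calc A i ≤ ∑ j ∈ Finset.Icc 1 i, A j := by
          apply Finset.single_le_sum (fun j _ => Nat.zero_le _)
          simp [hi]
      _ < A (i + 1) := by simpa using hinit (i + 1) (by omega) h
  · -- i + 1 = (i + 1 - N) + N
    set a := i + 1 - N with ha
    have h1 : 1 ≤ a := by omega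
    have key := hrec a h1
    have hidx : a + N = i + 1 := by omega
    have hidx2 : a + N - 1 = i := by omega
    rw [hidx2, hidx] at key
    rw [key]
    have hmem : i ∈ Finset.Icc a i := by simp; omega
    have := Finset.sum_erase_add (Finset.Icc a i) A hmem
    rw [← this]
    have hmem2 : a ∈ (Finset.Icc a i).erase i := by
      simp [Finset.mem_erase]; omega
    have : A a ≤ ∑ j ∈ (Finset.Icc a i).erase i, A j := by
      apply Finset.single_le_sum (fun j _ => Nat.zero_le _) hmem2
    have := hpos a h1
    omega

lemma qf_mono (N : ℕ) (hN : 2 ≤ N) (A : ℕ → ℕ) (hA : QuasiFib N A) :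
    ∀ i j, 1 ≤ i → i ≤ j → A i ≤ A j := by
  intro i j hi hij
  induction j, hij using Nat.le_induction with
  | base => exact le_refl _
  | succ m hm ih => exact le_trans ih (le_of_lt (qf_step N hN A hA m (by omega)))

lemma qf_claim (N : ℕ) (hN : 2 ≤ N) (A : ℕ → ℕ) (hA : QuasiFib N A) :
    ∀ m, (∑ i ∈ Finset.Icc 1 m, A i) < A (m + 2) := by
  intro m
  induction m using Nat.strong_induction_on with
  | _ m ih =>
  obtain ⟨hpos, hrec, hinit⟩ := hA
  rcases le_or_gt (m + 1) N with h | h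
  · have h0 := hinit (m + 1) (by omega) h
    simp only [Nat.add_sub_cancel] at h0
    exact lt_of_lt_of_le h0 (le_of_lt (qf_step N hN A ⟨hpos, hrec, hinit⟩ (m+1) (by omega)))
  · -- m ≥ N
    have hmN : N ≤ m := by omega
    set j := m - N with hj
    have key := hrec (j + 2) (by omega)
    have e1 : j + 2 + N = m + 2 := by omega
    have e2 : j + 2 + N - 1 = m + 1 := by omega
    rw [e2, e1] at key
    -- A (m+2) = ∑ Icc (j+2) (m+1) = ∑ Ioc (j+1) (m+1)
    -- ∑ Icc 1 m = ∑ Ioc 0 m = ∑ Ioc 0 (j+1) + ∑ Ioc (j+1) m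
    have split1 : ∑ i ∈ Finset.Ioc 0 (j+1), A i + ∑ i ∈ Finset.Ioc (j+1) m, A i
        = ∑ i ∈ Finset.Ioc 0 m, A i :=
      Finset.sum_Ioc_consecutive A (by omega) (by omega)
    have split2 : ∑ i ∈ Finset.Ioc (j+1) m, A i + ∑ i ∈ Finset.Ioc m (m+1), A i
        = ∑ i ∈ Finset.Ioc (j+1) (m+1), A i :=
      Finset.sum_Ioc_consecutive A (by omega) (by omega)
    have eIcc : Finset.Icc 1 m = Finset.Ioc 0 m := by
      ext x; simp [Nat.lt_iff_add_one_le]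
    have eIcc2 : Finset.Icc (j+2) (m+1) = Finset.Ioc (j+1) (m+1) := by
      ext x; simp only [Finset.mem_Icc, Finset.mem_Ioc]; omega
    have etop : Finset.Ioc m (m+1) = {m+1} := by
      exact Nat.Ioc_succ_singleton m
    have hIH : ∑ i ∈ Finset.Icc 1 (j+1), A i < A (j + 3) := by
      have := ih (j + 1) (by omega)
      simpa using this
    have hle : A (j + 3) ≤ A (m + 1) :=
      qf_mono N hN A ⟨hpos, hrec, hinit⟩ (j+3) (m+1) (by omega) (by omega)
    have eIcc3 : Finset.Icc 1 (j+1) = Finset.Ioc 0 (j+1) := by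
      ext x; simp [Nat.lt_iff_add_one_le]
    rw [key, eIcc2, ← split2, etop, Finset.sum_singleton, eIcc, ← split1]
    rw [eIcc3] at hIH
    omega

/-- Lemma 2.1(2): if `A_k ≤ n < A_{k+1}` then every `a ∈ S_n` has length `l(a) ∈ {k-1, k}`. -/
theorem stmt_2 (N : ℕ) (hN : 2 ≤ N) (A : ℕ → ℕ) (hA : QuasiFib N A)
    (k n : ℕ) (hk : 1 ≤ k) (h1 : A k ≤ n) (h2 : n < A (k + 1))
    (F : Finset ℕ) (hF : F ∈ SRep A n) :
    len F = k - 1 ∨ len F = k := by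
  obtain ⟨hpos, hsum⟩ := hF
  have hApos := hA.1
  have hne : F.Nonempty := by
    rcases Finset.eq_empty_or_nonempty F with h | h
    · exfalso; rw [h] at hsum; simp at hsum
      have := hApos k hk; omega
    · exact h
  obtain ⟨b, hbF, hbsup⟩ := Finset.exists_mem_eq_sup F hne id
  have hb1 : 1 ≤ b := hpos b hbF
  have hlen : len F = b := hbsup
  have hlenF1 : 1 ≤ len F := by omega
  -- upper bound : len F ≤ k
  have hub : len F ≤ k := by
    by_contra hcon
    push_neg at hcon
    have : A (k + 1) ≤ A (len F) :=
      qf_mono N hN A hA (k+1) (len F) (by omega) (by omega)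
    have : A (len F) ≤ n := by
      rw [← hsum, hlen]
      apply Finset.single_le_sum (fun j _ => Nat.zero_le _) hbF
    omega
  -- lower bound : len F ≥ k - 1
  have hlb : k - 1 ≤ len F := by
    rcases le_or_gt k 1 with h | h
    · omega
    by_contra hcon
    push_neg at hcon
    have hsub : F ⊆ Finset.Icc 1 (k - 2) := by
      intro i hiF
      simp only [Finset.mem_Icc]
      refine ⟨hpos i hiF, ?_⟩
      have : id i ≤ F.sup id := Finset.le_sup hiF
      simp only [id] at this
      have : i ≤ len F := this
      omega
    have hle : n ≤ ∑ i ∈ Finset.Icc 1 (k - 2), A i := by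
      rw [← hsum]
      exact Finset.sum_le_sum_of_subset hsub
    have hlt := qf_claim N hN A hA (k - 2)
    have : k - 2 + 2 = k := by omega
    rw [this] at hlt
    omega
  omega
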